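/- For every integer k ≥ 2, the deck-transformation group of the canonical projection p : L_k^♯ → ℝ is isomorphic to the symmetric group on k letters: Deck(p) ≅ 𝔖_k, the isomorphism sending a permutation σ to the deck transformation h_σ that permutes the origins by σ and fixes all other points. -/

import Mathlib

/-- The gluing relation on `Fin k × ℝ`: `(i,x) ∼ (j,y)` iff `x = y` and
(`x ≠ 0` or `i = j`), i.e. all non-zero points are glued and the origins stay apart. -/
def lineSetoid (k : ℕ) : Setoid (Fin k × ℝ) where
  r p q := p.2 = q.2 ∧ (p.2 ≠ 0 ∨ p.1 = q.1)
  iseqv := by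
    constructor
    · exact fun p => ⟨rfl, Or.inr rfl⟩
    · rintro p q ⟨h1, h2⟩
      refine ⟨h1.symm, ?_⟩
      rcases h2 with h | h
      · exact Or.inl (h1 ▸ h)
      · exact Or.inr h.symm
    · rintro p q r ⟨h1, h2⟩ ⟨h3, h4⟩
      refine ⟨h1.trans h3, ?_⟩
      rcases h2 with h | h
      · exact Or.inl h
      · rcases h4 with h' | h'
        · exact Or.inl (h1.symm ▸ h')
        · exact Or.inr (h.trans h')

/-- The line with `k` (inseparable) origins `L_k^♯`, as a quotient of `Fin k × ℝ`
equipped with the quotient topology. -/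
def LineK (k : ℕ) : Type := Quotient (lineSetoid k)

instance (k : ℕ) : TopologicalSpace (LineK k) :=
  inferInstanceAs (TopologicalSpace (Quotient (lineSetoid k)))

/-- `[x]_i`, the class of the point `x` on the `i`-th copy of `ℝ`. -/
def LineK.mk (k : ℕ) (i : Fin k) (x : ℝ) : LineK k := Quotient.mk (lineSetoid k) (i, x)

/-- The `i`-th origin `o_i = [0]_i`. -/
def LineK.origin (k : ℕ) (i : Fin k) : LineK k := LineK.mk k i 0

/-- The canonical projection `p : L_k^♯ → ℝ`, `[x]_i ↦ x`. -/
def LineK.proj (k : ℕ) : LineK k → ℝ :=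
  Quotient.lift (fun p => p.2) (fun _ _ h => h.1)

/-- The group of self-homeomorphisms of `L_k^♯` under composition. -/
instance (k : ℕ) : Group (LineK k ≃ₜ LineK k) where
  mul f g := g.trans f
  one := Homeomorph.refl _
  inv f := f.symm
  mul_assoc f g h := Homeomorph.ext fun _ => rfl
  one_mul f := Homeomorph.ext fun _ => rfl
  mul_one f := Homeomorph.ext fun _ => rfl
  inv_mul_cancel f := Homeomorph.ext f.symm_apply_apply

/-- The deck-transformation group `Deck(p)` of `p : L_k^♯ → ℝ`: the group of
homeomorphisms `h : L_k^♯ ≃ₜ L_k^♯` with `p ∘ h = p`. -/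
def Deck (k : ℕ) : Subgroup (LineK k ≃ₜ LineK k) where
  carrier := {h | ∀ q, LineK.proj k (h q) = LineK.proj k q}
  one_mem' := fun _ => rfl
  mul_mem' := by
    intro a b ha hb q
    exact (ha (b q)).trans (hb q)
  inv_mem' := by
    intro a ha q
    have h := ha (a.symm q)
    simpa using h.symm


namespace Stmt19Aux

/-- The map on `LineK k` induced by a permutation of the indices. -/
def permMap (k : ℕ) (σ : Equiv.Perm (Fin k)) : LineK k → LineK k :=
  Quotient.map (fun p => (σ p.1, p.2)) (by
    rintro ⟨i, x⟩ ⟨j, y⟩ ⟨h1, h2⟩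
    dsimp at h1 h2 ⊢
    exact ⟨h1, h2.imp id (fun h => by rw [h])⟩)

lemma permMap_mk (k : ℕ) (σ : Equiv.Perm (Fin k)) (i : Fin k) (x : ℝ) :
    permMap k σ (LineK.mk k i x) = LineK.mk k (σ i) x := rfl

lemma permMap_comp (k : ℕ) (σ τ : Equiv.Perm (Fin k)) (q : LineK k) :
    permMap k σ (permMap k τ q) = permMap k (σ * τ) q := by
  induction q using Quotient.inductionOn
  rfl

lemma permMap_one (k : ℕ) (q : LineK k) : permMap k 1 q = q := by
  induction q using Quotient.inductionOn
  rfl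

lemma continuous_permMap (k : ℕ) (σ : Equiv.Perm (Fin k)) :
    Continuous (permMap k σ) := by
  have hq : Topology.IsQuotientMap (Quotient.mk (lineSetoid k)) := isQuotientMap_quot_mk
  refine (hq.continuous_iff (g := permMap k σ)).mpr ?_
  have : (permMap k σ) ∘ (Quotient.mk (lineSetoid k))
      = (Quotient.mk (lineSetoid k)) ∘ (Prod.map σ id) := rfl
  rw [this]
  exact continuous_quot_mk.comp ((continuous_of_discreteTopology).prodMap continuous_id)

/-- The homeomorphism of `LineK k` induced by a permutation of the indices. -/
def permHomeo (k : ℕ) (σ : Equiv.Perm (Fin k)) : LineK k ≃ₜ LineK k where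
  toFun := permMap k σ
  invFun := permMap k σ⁻¹
  left_inv q := by rw [permMap_comp, inv_mul_cancel, permMap_one]
  right_inv q := by rw [permMap_comp, mul_inv_cancel, permMap_one]
  continuous_toFun := continuous_permMap k σ
  continuous_invFun := continuous_permMap k σ⁻¹

lemma proj_permMap (k : ℕ) (σ : Equiv.Perm (Fin k)) (q : LineK k) :
    LineK.proj k (permMap k σ q) = LineK.proj k q := by
  induction q using Quotient.inductionOn
  rfl

lemma permHomeo_mem_Deck (k : ℕ) (σ : Equiv.Perm (Fin k)) :
    permHomeo k σ ∈ Deck k := fun q => proj_permMap k σ q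

/-- Points with the same non-zero projection coincide. -/
lemma eq_of_proj_eq (k : ℕ) (q r : LineK k) (h : LineK.proj k q = LineK.proj k r)
    (hne : LineK.proj k q ≠ 0) : q = r := by
  induction q using Quotient.inductionOn with
  | h p =>
  induction r using Quotient.inductionOn with
  | h p' =>
  exact Quotient.sound ⟨h, Or.inl hne⟩

/-- Index of a point: the copy it lies on if it is an origin, junk otherwise. -/
noncomputable def idx (k : ℕ) (hk : 0 < k) : LineK k → Fin k :=
  Quotient.lift (fun p => if p.2 = 0 then p.1 else (⟨0, hk⟩ : Fin k)) (by
    rintro ⟨i, x⟩ ⟨j, y⟩ ⟨h1, h2⟩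
    dsimp at h1 ⊢
    subst h1
    rcases h2 with h | h
    · rw [if_neg h, if_neg h]
    · dsimp at h
      rw [h])

lemma idx_origin (k : ℕ) (hk : 0 < k) (i : Fin k) :
    idx k hk (LineK.origin k i) = i := by
  show (if (0:ℝ) = 0 then i else _) = i
  rw [if_pos rfl]

lemma eq_origin_of_proj_eq_zero (k : ℕ) (hk : 0 < k) (q : LineK k)
    (h : LineK.proj k q = 0) : q = LineK.origin k (idx k hk q) := by
  induction q using Quotient.inductionOn with
  | h p =>
  obtain ⟨i, x⟩ := p
  have hx : x = 0 := h
  subst hx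
  have h2 : idx k hk (⟦(i, 0)⟧ : LineK k) = i := idx_origin k hk i
  rw [h2]
  rfl

end Stmt19Aux

/-- For every integer `k ≥ 2`, the deck-transformation group of
`p : L_k^♯ → ℝ` is isomorphic to the symmetric group `𝔖_k`, the isomorphism
sending a permutation `σ` to the deck transformation `h_σ` that permutes the
origins by `σ` and fixes all other points. -/
theorem stmt19 (k : ℕ) (hk : 2 ≤ k) :
    ∃ Φ : Equiv.Perm (Fin k) ≃* Deck k,
      ∀ σ : Equiv.Perm (Fin k),
        (∀ i : Fin k,
          ((Φ σ : LineK k ≃ₜ LineK k)) (LineK.origin k i) = LineK.origin k (σ i)) ∧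
        (∀ q : LineK k, LineK.proj k q ≠ 0 → ((Φ σ : LineK k ≃ₜ LineK k)) q = q) :=  by
  classical
  open Stmt19Aux in
  have hpos : 0 < k := by omega
  -- the monoid hom
  have hmem := permHomeo_mem_Deck k
  let Φ0 : Equiv.Perm (Fin k) →* Deck k :=
    { toFun := fun σ => ⟨permHomeo k σ, hmem σ⟩
      map_one' := by
        ext q
        exact permMap_one k q
      map_mul' := fun σ τ => by
        ext q
        exact (permMap_comp k σ τ q).symm }
  have hΦ0 : ∀ σ (q : LineK k), ((Φ0 σ : LineK k ≃ₜ LineK k)) q = permMap k σ q :=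
    fun _ _ => rfl
  -- deck transformations fix points with non-zero projection
  have fix_nonzero : ∀ h : Deck k, ∀ q : LineK k, LineK.proj k q ≠ 0 →
      (h : LineK k ≃ₜ LineK k) q = q := by
    rintro ⟨h, hh⟩ q hq
    exact eq_of_proj_eq k _ _ (by rw [hh q]) (by rw [hh q]; exact hq)
  have hbij : Function.Bijective Φ0 := by
    constructor
    · intro σ τ hστ
      apply Equiv.ext
      intro i
      have : permMap k σ (LineK.origin k i) = permMap k τ (LineK.origin k i) := by
        rw [← hΦ0, ← hΦ0, hστ]
      have h2 := Quotient.exact this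
      exact h2.2.resolve_left (fun h => h rfl)
    · rintro ⟨h, hh⟩
      have hsymm : ∀ q, LineK.proj k (h.symm q) = LineK.proj k q := by
        intro q
        rw [← hh (h.symm q), h.apply_symm_apply]
      have horig : ∀ i, h (LineK.origin k i)
          = LineK.origin k (idx k hpos (h (LineK.origin k i))) := by
        intro i
        exact eq_origin_of_proj_eq_zero k hpos _ (hh _)
      have horig' : ∀ i, h.symm (LineK.origin k i)
          = LineK.origin k (idx k hpos (h.symm (LineK.origin k i))) := by
        intro i
        exact eq_origin_of_proj_eq_zero k hpos _ (hsymm _)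
      refine ⟨⟨fun i => idx k hpos (h (LineK.origin k i)),
              fun i => idx k hpos (h.symm (LineK.origin k i)), ?_, ?_⟩, ?_⟩
      · intro i
        dsimp only
        rw [← horig i, h.symm_apply_apply, idx_origin]
      · intro i
        dsimp only
        rw [← horig' i, h.apply_symm_apply, idx_origin]
      · apply Subtype.ext
        apply Homeomorph.ext
        intro q
        induction q using Quotient.inductionOn with
        | h p =>
        obtain ⟨i, x⟩ := p
        rcases eq_or_ne x 0 with rfl | hx
        · show permMap k _ (LineK.mk k i 0) = _
          rw [permMap_mk]
          exact (horig i).symm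
        · have hq : LineK.proj k (Quotient.mk (lineSetoid k) (i, x)) ≠ 0 := hx
          rw [fix_nonzero ⟨h, hh⟩ _ hq]
          show permMap k _ (LineK.mk k i x) = LineK.mk k i x
          rw [permMap_mk]
          exact eq_of_proj_eq k _ _ rfl hx
  refine ⟨MulEquiv.ofBijective Φ0 hbij, fun σ => ⟨fun i => rfl, fun q hq => ?_⟩⟩
  have : ((MulEquiv.ofBijective Φ0 hbij) σ : LineK k ≃ₜ LineK k) q = permMap k σ q := rfl
  rw [this]
  induction q using Quotient.inductionOn with
  | h p =>
  obtain ⟨i, x⟩ := p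
  show permMap k σ (LineK.mk k i x) = LineK.mk k i x
  rw [permMap_mk]
  exact eq_of_proj_eq k _ _ rfl hq
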